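/- arXiv:2303.09009 — 2 statements merged into one kernel-verified Lean document; each statement's English description precedes it below -/
import Mathlib

section
/- (Accelerated gradient and skew-symmetric splitting for strongly-convex-strongly-concave saddle point problems.) Let I_V (m×m) and I_Q (n×n) be symmetric positive definite, B ∈ ℝ^{n×m}, and let f : ℝ^m → ℝ, g : ℝ^n → ℝ be differentiable with (μ_f/2)‖u−u'‖²_{I_V} ≤ D_f(u,u') ≤ (L_f/2)‖u−u'‖²_{I_V} and (μ_g/2)‖p−p'‖²_{I_Q} ≤ D_g(p,p') ≤ (L_g/2)‖p−p'‖²_{I_Q} for all arguments, with μ_f, μ_g > 0. Let (u*, p*) satisfy ∇f(u*) + Bᵀp* = 0 and −Bu* + ∇g(p*) = 0, and let L_S = λ_max(I_Q^{−1} B I_V^{−1} Bᵀ). Write x = (u,p), y = (v,q), x* = (u*,p*), I_μ = diag(μ_f I_V, μ_g I_Q), B^sym = [[0,Bᵀ],[B,0]]. Suppose 0 < α ≤ min{√(μ_f μ_g/(4L_S)), √(μ_f/(2L_f)), √(μ_g/(2L_g))} and the sequences satisfy (x̂_{k+1} − x_k)/α = y_k − x̂_{k+1}, (v_{k+1} −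 v_k)/α = û_{k+1} − v_{k+1} − (1/μ_f) I_V^{−1}(∇f(û_{k+1}) + Bᵀ q_k), (q_{k+1} − q_k)/α = p̂_{k+1} − q_{k+1} − (1/μ_g) I_Q^{−1}(∇g(p̂_{k+1}) − 2B v_{k+1} + B v_k), and (x_{k+1} − x_k)/α = y_{k+1} − x_{k+1} + (1/2)(x_{k+1} − x̂_{k+1}). Then with E^{αB}(x,y) = D_f(u,u*) + D_g(p,p*) + (1/2)(y − x*)ᵀ(I_μ − α B^sym)(y − x*), one has E^{αB}(x_{k+1}, y_{k+1}) ≤ (1 + α/2)^{−1} E^{αB}(x_k, y_k) for every k. -/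
open Matrix

/-- Bregman divergence `D_h(x,y) = h(x) - h(y) - ⟨∇h(y), x - y⟩`. -/
noncomputable def breg {d : ℕ} (h : (Fin d → ℝ) → ℝ)
    (gradh : (Fin d → ℝ) → (Fin d → ℝ)) (x y : Fin d → ℝ) : ℝ :=
  h x - h y - gradh y ⬝ᵥ (x - y)

/-- The continuous linear functional `v ↦ ⟨z, v⟩`. -/
noncomputable def dpCLM {d : ℕ} (z : Fin d → ℝ) : (Fin d → ℝ) →L[ℝ] ℝ :=
  LinearMap.toContinuousLinearMap
    { toFun := fun v => z ⬝ᵥ v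
      map_add' := fun a b => by simp [dotProduct_add]
      map_smul' := fun c a => by simp [dotProduct_smul] }

/- ### Auxiliary lemmas -/

lemma breg4 {d : ℕ} (h : (Fin d → ℝ) → ℝ) (gh : (Fin d → ℝ) → (Fin d → ℝ))
    (x y z w : Fin d → ℝ) :
    breg h gh x z - breg h gh y z
      = breg h gh x w - breg h gh y w + (gh w - gh z) ⬝ᵥ (x - y) := by
  simp only [breg, sub_dotProduct, dotProduct_sub]
  ring

lemma breg_symm_sum {d : ℕ} (h : (Fin d → ℝ) → ℝ) (gh : (Fin d → ℝ) → (Fin d → ℝ))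
    (x y : Fin d → ℝ) :
    breg h gh x y + breg h gh y x = (gh x - gh y) ⬝ᵥ (x - y) := by
  simp only [breg, sub_dotProduct, dotProduct_sub]
  ring

lemma breg_self {d : ℕ} (h : (Fin d → ℝ) → ℝ) (gh : (Fin d → ℝ) → (Fin d → ℝ))
    (x : Fin d → ℝ) : breg h gh x x = 0 := by simp [breg]

lemma dotM_symm {d : ℕ} (M : Matrix (Fin d) (Fin d) ℝ) (hsym : Mᵀ = M)
    (x y : Fin d → ℝ) : x ⬝ᵥ M.mulVec y = y ⬝ᵥ M.mulVec x := by
  rw [Matrix.dotProduct_mulVec, show x ᵥ* M = M *ᵥ x by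
    conv_lhs => rw [← hsym, Matrix.vecMul_transpose]]
  exact dotProduct_comm _ _

lemma dotBT {m n : ℕ} (B : Matrix (Fin n) (Fin m) ℝ) (z : Fin n → ℝ) (w : Fin m → ℝ) :
    Bᵀ.mulVec z ⬝ᵥ w = z ⬝ᵥ B.mulVec w := by
  rw [Matrix.mulVec_transpose, ← Matrix.dotProduct_mulVec]

lemma dot_inv_cancel {d : ℕ} (M : Matrix (Fin d) (Fin d) ℝ) (hsym : Mᵀ = M)
    (hdet : IsUnit M.det) (x y : Fin d → ℝ) :
    (M⁻¹.mulVec x) ⬝ᵥ (M.mulVec y) = x ⬝ᵥ y := by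
  rw [dotProduct_comm, Matrix.dotProduct_mulVec,
    show (M *ᵥ y) ᵥ* M⁻¹ = y by
      rw [← Matrix.mulVec_transpose, Matrix.transpose_nonsing_inv, hsym,
        Matrix.mulVec_mulVec, Matrix.nonsing_inv_mul M hdet, Matrix.one_mulVec],
    dotProduct_comm]

lemma qnn {d : ℕ} {M : Matrix (Fin d) (Fin d) ℝ} (hM : M.PosDef) (x : Fin d → ℝ) :
    0 ≤ x ⬝ᵥ M.mulVec x := by
  have := hM.posSemidef.dotProduct_mulVec_nonneg x
  simpa using this

lemma sq_expand {d : ℕ} (M : Matrix (Fin d) (Fin d) ℝ) (hsym : Mᵀ = M)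
    (x y : Fin d → ℝ) :
    2 * ((x - y) ⬝ᵥ M.mulVec x)
      = x ⬝ᵥ M.mulVec x - y ⬝ᵥ M.mulVec y + (x - y) ⬝ᵥ M.mulVec (x - y) := by
  have h := dotM_symm M hsym x y
  simp only [sub_dotProduct, Matrix.mulVec_sub, dotProduct_sub]
  linarith

lemma sq_ub {d : ℕ} {M : Matrix (Fin d) (Fin d) ℝ} (hM : M.PosDef) (hsym : Mᵀ = M)
    (x y : Fin d → ℝ) :
    2 * (x ⬝ᵥ M.mulVec y) ≤ x ⬝ᵥ M.mulVec x + y ⬝ᵥ M.mulVec y := by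
  have h0 := qnn hM (x - y)
  have h := dotM_symm M hsym x y
  simp only [sub_dotProduct, Matrix.mulVec_sub, dotProduct_sub] at h0
  linarith

lemma quad_neg {d : ℕ} (M : Matrix (Fin d) (Fin d) ℝ) (x : Fin d → ℝ) :
    (-x) ⬝ᵥ M.mulVec (-x) = x ⬝ᵥ M.mulVec x := by
  simp [neg_dotProduct, Matrix.mulVec_neg]

lemma quadE {m n : ℕ} (IV : Matrix (Fin m) (Fin m) ℝ) (IQ : Matrix (Fin n) (Fin n) ℝ)
    (B : Matrix (Fin n) (Fin m) ℝ) (μf μg α : ℝ) (a : Fin m → ℝ) (b : Fin n → ℝ) :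
    Sum.elim a b ⬝ᵥ ((Matrix.fromBlocks (μf • IV) 0 0 (μg • IQ)
        - α • Matrix.fromBlocks 0 Bᵀ B 0).mulVec (Sum.elim a b))
      = μf * (a ⬝ᵥ IV.mulVec a) + μg * (b ⬝ᵥ IQ.mulVec b)
        - 2 * α * (b ⬝ᵥ B.mulVec a) := by
  have hT : a ⬝ᵥ Bᵀ.mulVec b = b ⬝ᵥ B.mulVec a := by
    rw [Matrix.dotProduct_mulVec, Matrix.vecMul_transpose, dotProduct_comm]
  simp only [Matrix.sub_mulVec, Matrix.smul_mulVec, Matrix.fromBlocks_mulVec,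
    Matrix.zero_mulVec, add_zero, zero_add, dotProduct_sub, dotProduct_smul,
    Sum.elim_comp_inl, Sum.elim_comp_inr,
    sumElim_dotProduct_sumElim, smul_eq_mul]
  rw [hT]
  ring

lemma key_cross {m n : ℕ} (IV : Matrix (Fin m) (Fin m) ℝ) (IQ : Matrix (Fin n) (Fin n) ℝ)
    (B : Matrix (Fin n) (Fin m) ℝ) (hIV : IV.PosDef)
    (μf μg α LS : ℝ) (hμf : 0 < μf) (hα : 0 ≤ α)
    (hVs : IVᵀ = IV) (hVdet : IsUnit IV.det)
    (hLS1 : ∀ p : Fin n → ℝ,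
      p ⬝ᵥ (B * IV⁻¹ * Bᵀ).mulVec p ≤ LS * (p ⬝ᵥ IQ.mulVec p))
    (hPz : ∀ p : Fin n → ℝ, 0 ≤ p ⬝ᵥ IQ.mulVec p)
    (hαS : α ^ 2 * LS ≤ μf * μg / 4) (w : Fin m → ℝ) (z : Fin n → ℝ) :
    α * (z ⬝ᵥ B.mulVec w)
      ≤ μf / 4 * (w ⬝ᵥ IV.mulVec w) + μg / 4 * (z ⬝ᵥ IQ.mulVec z) := by
  set c := IV⁻¹.mulVec (Bᵀ.mulVec z) with hc
  have hinv : IV.mulVec c = Bᵀ.mulVec z := by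
    rw [hc, Matrix.mulVec_mulVec, Matrix.mul_nonsing_inv IV hVdet, Matrix.one_mulVec]
  have hwc : w ⬝ᵥ IV.mulVec c = z ⬝ᵥ B.mulVec w := by
    rw [hinv, dotProduct_comm, dotBT]
  have hcw : c ⬝ᵥ IV.mulVec w = z ⬝ᵥ B.mulVec w := by
    rw [dotM_symm IV hVs]; exact hwc
  have hcc : c ⬝ᵥ IV.mulVec c = z ⬝ᵥ (B * IV⁻¹ * Bᵀ).mulVec z := by
    rw [hinv]
    calc c ⬝ᵥ (Bᵀ.mulVec z) = Bᵀ.mulVec z ⬝ᵥ c := dotProduct_comm _ _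
      _ = z ⬝ᵥ B.mulVec c := dotBT B z c
      _ = z ⬝ᵥ (B * IV⁻¹ * Bᵀ).mulVec z := by
          rw [hc, Matrix.mulVec_mulVec, Matrix.mulVec_mulVec]
  have h0 := qnn hIV ((μf / 2) • w - α • c)
  simp only [sub_dotProduct, smul_dotProduct, Matrix.mulVec_sub,
    Matrix.mulVec_smul, dotProduct_sub, dotProduct_smul, smul_eq_mul] at h0
  rw [hwc, hcw, hcc] at h0
  have h1 : α ^ 2 * (z ⬝ᵥ (B * IV⁻¹ * Bᵀ).mulVec z) ≤ α ^ 2 * (LS * (z ⬝ᵥ IQ.mulVec z)) :=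
    mul_le_mul_of_nonneg_left (hLS1 z) (sq_nonneg α)
  have h2 : α ^ 2 * LS * (z ⬝ᵥ IQ.mulVec z) ≤ μf * μg / 4 * (z ⬝ᵥ IQ.mulVec z) :=
    mul_le_mul_of_nonneg_right hαS (hPz z)
  nlinarith [h0, h1, h2, hμf, hPz z, qnn hIV w]

lemma smooth_bound (α L μ P W D : ℝ) (hα : 0 < α) (hL : 0 < L)
    (hD : D ≤ L/2 * P) (hP : 0 ≤ P) (hW : 0 ≤ W)
    (hsq : (1 + α/2) * ((1 + α/2) * P) = α * (α * W))
    (hαL : L * α ^ 2 ≤ μ / 2) :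
    (1 + α/2) * D ≤ μ/4 * W := by
  have t1 : (1 + α/2) * D ≤ (1 + α/2) * (L/2 * P) :=
    mul_le_mul_of_nonneg_left hD (by linarith)
  have t2 : (1 + α/2) * (L/2 * P) ≤ L/2 * (α * (α * W)) := by
    nlinarith [mul_nonneg (mul_nonneg hL.le hP) hα.le]
  have t3 : L/2 * (α * (α * W)) ≤ μ/4 * W := by
    nlinarith [mul_nonneg (by nlinarith : (0:ℝ) ≤ μ/2 - L * α^2) hW]
  linarith

set_option maxHeartbeats 1000000 in
lemma combine (α μf μg : ℝ)
    (Df1 Df0 Dfh Dfsh Df1h Df0h Dg1 Dg0 Dgh Dgsh Dg1h Dg0h : ℝ)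
    (A1 A2 W B0 B1 Z Ea Pe Hb Ph cab0 cab1 c01 c10 X sF sG Gfa1 Ggb1 WA ZB : ℝ)
    (hα0 : 0 < α) (hμf : 0 < μf) (hμg : 0 < μg)
    (e1 : Df1 - Df0 = Df1h - Df0h + (α*Gfa1 - α*(Dfh + Dfsh) - (α/2)*sF))
    (e2 : Dg1 - Dg0 = Dg1h - Dg0h + (α*Ggb1 - α*(Dgh + Dgsh) - (α/2)*sG))
    (e3 : Df1 = Dfh + Df1h + sF)
    (e4 : Dg1 = Dgh + Dg1h + sG)
    (e5 : μf * WA = α*μf*Ea - α*μf*A2 - α*Gfa1 - α*c01)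
    (e6 : μg * ZB = α*μg*Hb - α*μg*B1 - α*Ggb1 + 2*α*cab1 - α*c10)
    (e7 : 2*WA = A2 - A1 + W)
    (e8 : 2*ZB = B1 - B0 + Z)
    (e9 : X = cab1 - c10 - c01 + cab0)
    (i1 : α*X ≤ μf/4*W + μg/4*Z)
    (i2 : α*(-cab1) ≤ μf/4*A2 + μg/4*B1)
    (i3 : (1+α/2)*Df1h ≤ μf/4*W)
    (i4 : (1+α/2)*Dg1h ≤ μg/4*Z)
    (i5 : μf/2*Pe ≤ Dfsh) (i6 : μg/2*Ph ≤ Dgsh)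
    (i7 : 2*Ea ≤ Pe + A2) (i8 : 2*Hb ≤ Ph + B1)
    (i9 : 0 ≤ Df0h) (i10 : 0 ≤ Dg0h) (i11 : 0 ≤ Dfh) (i12 : 0 ≤ Dgh)
    (i13 : 0 ≤ A2) (i14 : 0 ≤ B1) :
    (Df1 + Dg1 + 1/2*(μf*A2 + μg*B1 - 2*α*cab1)) * (1 + α/2)
      ≤ Df0 + Dg0 + 1/2*(μf*A1 + μg*B0 - 2*α*cab0) := by
  have e3' : α*Df1 = α*(Dfh + Df1h + sF) := by rw [e3]
  have e4' : α*Dg1 = α*(Dgh + Dg1h + sG) := by rw [e4]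
  have e7' : μf*(2*WA) = μf*(A2 - A1 + W) := by rw [e7]
  have e8' : μg*(2*ZB) = μg*(B1 - B0 + Z) := by rw [e8]
  have e9' : α*X = α*(cab1 - c10 - c01 + cab0) := by rw [e9]
  have i2' : α/2*(α*(-cab1)) ≤ α/2*(μf/4*A2 + μg/4*B1) :=
    mul_le_mul_of_nonneg_left i2 (by linarith)
  have i5' : α*(μf/2*Pe) ≤ α*Dfsh := mul_le_mul_of_nonneg_left i5 hα0.le
  have i6' : α*(μg/2*Ph) ≤ α*Dgsh := mul_le_mul_of_nonneg_left i6 hα0.le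
  have i7' : α*μf/2*(2*Ea) ≤ α*μf/2*(Pe + A2) :=
    mul_le_mul_of_nonneg_left i7 (by positivity)
  have i8' : α*μg/2*(2*Hb) ≤ α*μg/2*(Ph + B1) :=
    mul_le_mul_of_nonneg_left i8 (by positivity)
  have i11' : 0 ≤ α*Dfh := mul_nonneg hα0.le i11
  have i12' : 0 ≤ α*Dgh := mul_nonneg hα0.le i12
  have i13' : 0 ≤ α*(μf*A2) := mul_nonneg hα0.le (mul_nonneg hμf.le i13)
  have i14' : 0 ≤ α*(μg*B1) := mul_nonneg hα0.le (mul_nonneg hμg.le i14)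
  linarith [e1, e2, e3', e4', e5, e6, e7', e8', e9', i1, i2', i3, i4, i5', i6',
    i7', i8', i9, i10, i11', i12', i13', i14']

set_option maxHeartbeats 2000000 in
/-- **Accelerated gradient and skew-symmetric splitting for strongly-convex–strongly-concave
saddle point problems.**  With `E^{αB}(x,y) = D_f(u,u*) + D_g(p,p*) +
½(y-x*)ᵀ(I_μ - αBˢʸᵐ)(y-x*)`, the AGSS iteration contracts:
`E^{αB}(x_{k+1},y_{k+1}) ≤ (1 + α/2)⁻¹ E^{αB}(x_k,y_k)`. -/
theorem saddle_agss_linear_convergence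
    {m n : ℕ}
    (IV : Matrix (Fin m) (Fin m) ℝ) (IQ : Matrix (Fin n) (Fin n) ℝ)
    (hIV : IV.PosDef) (hIQ : IQ.PosDef)
    (B : Matrix (Fin n) (Fin m) ℝ)
    (μf Lf μg Lg LS α : ℝ) (hμf : 0 < μf) (hμg : 0 < μg)
    (f : (Fin m → ℝ) → ℝ) (gradf : (Fin m → ℝ) → (Fin m → ℝ))
    (hf : ∀ u, HasFDerivAt f (dpCLM (gradf u)) u)
    (hflow : ∀ u u' : Fin m → ℝ,
      μf / 2 * ((u - u') ⬝ᵥ IV.mulVec (u - u')) ≤ breg f gradf u u')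
    (hfup : ∀ u u' : Fin m → ℝ,
      breg f gradf u u' ≤ Lf / 2 * ((u - u') ⬝ᵥ IV.mulVec (u - u')))
    (g : (Fin n → ℝ) → ℝ) (gradg : (Fin n → ℝ) → (Fin n → ℝ))
    (hg : ∀ p, HasFDerivAt g (dpCLM (gradg p)) p)
    (hglow : ∀ p p' : Fin n → ℝ,
      μg / 2 * ((p - p') ⬝ᵥ IQ.mulVec (p - p')) ≤ breg g gradg p p')
    (hgup : ∀ p p' : Fin n → ℝ,
      breg g gradg p p' ≤ Lg / 2 * ((p - p') ⬝ᵥ IQ.mulVec (p - p')))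
    (us : Fin m → ℝ) (ps : Fin n → ℝ)
    (hsad1 : gradf us + Bᵀ.mulVec ps = 0)
    (hsad2 : -(B.mulVec us) + gradg ps = 0)
    (hLS : IsLeast {r : ℝ | ∀ p : Fin n → ℝ,
      p ⬝ᵥ (B * IV⁻¹ * Bᵀ).mulVec p ≤ r * (p ⬝ᵥ IQ.mulVec p)} LS)
    (hα0 : 0 < α)
    (hα1 : α ≤ min (min (Real.sqrt (μf * μg / (4 * LS)))
              (Real.sqrt (μf / (2 * Lf)))) (Real.sqrt (μg / (2 * Lg))))
    (u v uh : ℕ → (Fin m → ℝ)) (p q ph : ℕ → (Fin n → ℝ))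
    (hstep1u : ∀ k, uh (k + 1) - u k = α • (v k - uh (k + 1)))
    (hstep1p : ∀ k, ph (k + 1) - p k = α • (q k - ph (k + 1)))
    (hstep2 : ∀ k, v (k + 1) - v k =
      α • (uh (k + 1) - v (k + 1)
        - (1 / μf) • IV⁻¹.mulVec (gradf (uh (k + 1)) + Bᵀ.mulVec (q k))))
    (hstep3 : ∀ k, q (k + 1) - q k =
      α • (ph (k + 1) - q (k + 1)
        - (1 / μg) • IQ⁻¹.mulVec (gradg (ph (k + 1))
            - (2 : ℝ) • B.mulVec (v (k + 1)) + B.mulVec (v k))))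
    (hstep4u : ∀ k, u (k + 1) - u k =
      α • (v (k + 1) - u (k + 1) + (1 / 2 : ℝ) • (u (k + 1) - uh (k + 1))))
    (hstep4p : ∀ k, p (k + 1) - p k =
      α • (q (k + 1) - p (k + 1) + (1 / 2 : ℝ) • (p (k + 1) - ph (k + 1)))) :
    ∀ k,
      breg f gradf (u (k + 1)) us + breg g gradg (p (k + 1)) ps
        + (1 / 2) * (Sum.elim (v (k + 1) - us) (q (k + 1) - ps) ⬝ᵥ
            ((Matrix.fromBlocks (μf • IV) 0 0 (μg • IQ)
              - α • Matrix.fromBlocks 0 Bᵀ B 0).mulVec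
                (Sum.elim (v (k + 1) - us) (q (k + 1) - ps))))
      ≤ (1 + α / 2)⁻¹ *
        (breg f gradf (u k) us + breg g gradg (p k) ps
          + (1 / 2) * (Sum.elim (v k - us) (q k - ps) ⬝ᵥ
              ((Matrix.fromBlocks (μf • IV) 0 0 (μg • IQ)
                - α • Matrix.fromBlocks 0 Bᵀ B 0).mulVec
                  (Sum.elim (v k - us) (q k - ps))))) := by
  -- positivity of the various constants
  have hden : (0:ℝ) < 1 + α / 2 := by linarith
  have keyc : ∀ c : ℝ, α ≤ Real.sqrt c → 0 < c ∧ α ^ 2 ≤ c := by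
    intro c hc
    have hc0 : 0 < c := by
      by_contra hc0
      push_neg at hc0
      rw [Real.sqrt_eq_zero'.2 (by linarith)] at hc
      linarith
    exact ⟨hc0, (Real.le_sqrt hα0.le hc0.le).1 hc⟩
  have hcS := keyc _ (le_trans hα1 ((min_le_left _ _).trans (min_le_left _ _)))
  have hcF := keyc _ (le_trans hα1 ((min_le_left _ _).trans (min_le_right _ _)))
  have hcG := keyc _ (le_trans hα1 (min_le_right _ _))
  have hLf : 0 < Lf := by
    rcases lt_trichotomy Lf 0 with h | h | h
    · have : μf / (2 * Lf) ≤ 0 :=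
        div_nonpos_of_nonneg_of_nonpos hμf.le (by linarith)
      linarith [hcF.1]
    · rw [h] at hcF; norm_num at hcF
    · exact h
  have hLg : 0 < Lg := by
    rcases lt_trichotomy Lg 0 with h | h | h
    · have : μg / (2 * Lg) ≤ 0 :=
        div_nonpos_of_nonneg_of_nonpos hμg.le (by linarith)
      linarith [hcG.1]
    · rw [h] at hcG; norm_num at hcG
    · exact h
  have hLS0 : 0 < LS := by
    rcases lt_trichotomy LS 0 with h | h | h
    · have : μf * μg / (4 * LS) ≤ 0 :=
        div_nonpos_of_nonneg_of_nonpos (by positivity) (by linarith)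
      linarith [hcS.1]
    · rw [h] at hcS; norm_num at hcS
    · exact h
  have hαf : Lf * α ^ 2 ≤ μf / 2 := by
    have h := hcF.2
    rw [le_div_iff₀ (by linarith : (0:ℝ) < 2 * Lf)] at h
    linarith
  have hαg : Lg * α ^ 2 ≤ μg / 2 := by
    have h := hcG.2
    rw [le_div_iff₀ (by linarith : (0:ℝ) < 2 * Lg)] at h
    linarith
  have hαS : α ^ 2 * LS ≤ μf * μg / 4 := by
    have h := hcS.2
    rw [le_div_iff₀ (by linarith : (0:ℝ) < 4 * LS)] at h
    linarith
  -- matrix facts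
  have hVs : IVᵀ = IV := by
    have := hIV.isHermitian
    simpa [Matrix.IsHermitian] using this
  have hQs : IQᵀ = IQ := by
    have := hIQ.isHermitian
    simpa [Matrix.IsHermitian] using this
  have hVdet : IsUnit IV.det := isUnit_iff_ne_zero.2 (ne_of_gt hIV.det_pos)
  have hQdet : IsUnit IQ.det := isUnit_iff_ne_zero.2 (ne_of_gt hIQ.det_pos)
  have hcross := key_cross IV IQ B hIV μf μg α LS hμf hα0.le hVs hVdet hLS.1
    (fun z => qnn hIQ z) hαS
  intro k
  have h1u := hstep1u k
  have h1p := hstep1p k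
  have h2 := hstep2 k
  have h3 := hstep3 k
  have h4u := hstep4u k
  have h4p := hstep4p k
  set u0 := u k with hu0
  set u1 := u (k + 1) with hu1
  set uh1 := uh (k + 1) with huh1
  set v0 := v k with hv0
  set v1 := v (k + 1) with hv1
  set p0 := p k with hp0
  set p1 := p (k + 1) with hp1
  set ph1 := ph (k + 1) with hph1
  set q0 := q k with hq0
  set q1 := q (k + 1) with hq1
  -- e1 : Bregman difference identity (f side)
  have hGfd : (gradf uh1 - gradf us) ⬝ᵥ (u1 - u0)
      = α * ((gradf uh1 - gradf us) ⬝ᵥ (v1 - us))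
        - α * (breg f gradf uh1 us + breg f gradf us uh1)
        - (α/2) * ((gradf uh1 - gradf us) ⬝ᵥ (u1 - uh1)) := by
    have hsum := breg_symm_sum f gradf uh1 us
    have h4 := congrArg (fun t => (gradf uh1 - gradf us) ⬝ᵥ t) h4u
    rw [show α • (v1 - u1 + (1/2 : ℝ) • (u1 - uh1))
        = α • ((v1 - us) - (uh1 - us) - (1/2 : ℝ) • (u1 - uh1)) from by module] at h4
    simp only [dotProduct_smul, dotProduct_sub, smul_eq_mul] at h4 hsum ⊢
    linear_combination h4 + α * hsum
  have E1 : breg f gradf u1 us - breg f gradf u0 us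
      = breg f gradf u1 uh1 - breg f gradf u0 uh1
        + (α * ((gradf uh1 - gradf us) ⬝ᵥ (v1 - us))
          - α * (breg f gradf uh1 us + breg f gradf us uh1)
          - (α/2) * ((gradf uh1 - gradf us) ⬝ᵥ (u1 - uh1))) := by
    rw [breg4 f gradf u1 u0 us uh1, hGfd]
  -- e2 : Bregman difference identity (g side)
  have hGgd : (gradg ph1 - gradg ps) ⬝ᵥ (p1 - p0)
      = α * ((gradg ph1 - gradg ps) ⬝ᵥ (q1 - ps))
        - α * (breg g gradg ph1 ps + breg g gradg ps ph1)
        - (α/2) * ((gradg ph1 - gradg ps) ⬝ᵥ (p1 - ph1)) := by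
    have hsum := breg_symm_sum g gradg ph1 ps
    have h4 := congrArg (fun t => (gradg ph1 - gradg ps) ⬝ᵥ t) h4p
    rw [show α • (q1 - p1 + (1/2 : ℝ) • (p1 - ph1))
        = α • ((q1 - ps) - (ph1 - ps) - (1/2 : ℝ) • (p1 - ph1)) from by module] at h4
    simp only [dotProduct_smul, dotProduct_sub, smul_eq_mul] at h4 hsum ⊢
    linear_combination h4 + α * hsum
  have E2 : breg g gradg p1 ps - breg g gradg p0 ps
      = breg g gradg p1 ph1 - breg g gradg p0 ph1
        + (α * ((gradg ph1 - gradg ps) ⬝ᵥ (q1 - ps))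
          - α * (breg g gradg ph1 ps + breg g gradg ps ph1)
          - (α/2) * ((gradg ph1 - gradg ps) ⬝ᵥ (p1 - ph1))) := by
    rw [breg4 g gradg p1 p0 ps ph1, hGgd]
  -- e3, e4
  have E3 : breg f gradf u1 us
      = breg f gradf uh1 us + breg f gradf u1 uh1
        + (gradf uh1 - gradf us) ⬝ᵥ (u1 - uh1) := by
    have h := breg4 f gradf u1 uh1 us uh1
    rw [breg_self] at h
    linarith [h]
  have E4 : breg g gradg p1 ps
      = breg g gradg ph1 ps + breg g gradg p1 ph1
        + (gradg ph1 - gradg ps) ⬝ᵥ (p1 - ph1) := by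
    have h := breg4 g gradg p1 ph1 ps ph1
    rw [breg_self] at h
    linarith [h]
  -- e5 : step 2 dotted with IV(v1 - us)
  have E5 : μf * ((v1 - v0) ⬝ᵥ IV.mulVec (v1 - us))
      = α * μf * ((uh1 - us) ⬝ᵥ IV.mulVec (v1 - us))
        - α * μf * ((v1 - us) ⬝ᵥ IV.mulVec (v1 - us))
        - α * ((gradf uh1 - gradf us) ⬝ᵥ (v1 - us))
        - α * ((q0 - ps) ⬝ᵥ B.mulVec (v1 - us)) := by
    have hG : gradf uh1 + Bᵀ.mulVec q0
        = (gradf uh1 - gradf us) + Bᵀ.mulVec (q0 - ps) := by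
      simp only [Matrix.mulVec_sub]
      linear_combination (norm := module) hsad1
    have hdot := congrArg (fun t => t ⬝ᵥ IV.mulVec (v1 - us)) h2
    simp only [smul_dotProduct, sub_dotProduct, smul_eq_mul] at hdot
    rw [hG, dot_inv_cancel IV hVs hVdet, add_dotProduct, dotBT] at hdot
    simp only [sub_dotProduct, dotProduct_sub]
    field_simp at hdot
    simp only [sub_dotProduct, dotProduct_sub] at hdot
    linarith [hdot]
  -- e6 : step 3 dotted with IQ(q1 - ps)
  have E6 : μg * ((q1 - q0) ⬝ᵥ IQ.mulVec (q1 - ps))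
      = α * μg * ((ph1 - ps) ⬝ᵥ IQ.mulVec (q1 - ps))
        - α * μg * ((q1 - ps) ⬝ᵥ IQ.mulVec (q1 - ps))
        - α * ((gradg ph1 - gradg ps) ⬝ᵥ (q1 - ps))
        + 2 * α * ((q1 - ps) ⬝ᵥ B.mulVec (v1 - us))
        - α * ((q1 - ps) ⬝ᵥ B.mulVec (v0 - us)) := by
    have hG : gradg ph1 - (2 : ℝ) • B.mulVec v1 + B.mulVec v0
        = (gradg ph1 - gradg ps) - (2 : ℝ) • B.mulVec (v1 - us)
          + B.mulVec (v0 - us) := by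
      simp only [Matrix.mulVec_sub]
      linear_combination (norm := module) hsad2
    have hdot := congrArg (fun t => t ⬝ᵥ IQ.mulVec (q1 - ps)) h3
    simp only [smul_dotProduct, sub_dotProduct, smul_eq_mul] at hdot
    rw [hG, dot_inv_cancel IQ hQs hQdet, add_dotProduct, sub_dotProduct,
      smul_dotProduct, dotProduct_comm (B.mulVec (v1 - us)) (q1 - ps),
      dotProduct_comm (B.mulVec (v0 - us)) (q1 - ps)] at hdot
    simp only [sub_dotProduct, dotProduct_sub, smul_eq_mul] at hdot ⊢
    field_simp at hdot
    linarith [hdot]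
  -- e7, e8
  have E7 : 2 * ((v1 - v0) ⬝ᵥ IV.mulVec (v1 - us))
      = (v1 - us) ⬝ᵥ IV.mulVec (v1 - us) - (v0 - us) ⬝ᵥ IV.mulVec (v0 - us)
        + (v1 - v0) ⬝ᵥ IV.mulVec (v1 - v0) := by
    have h := sq_expand IV hVs (v1 - us) (v0 - us)
    rw [show v1 - us - (v0 - us) = v1 - v0 by abel] at h
    exact h
  have E8 : 2 * ((q1 - q0) ⬝ᵥ IQ.mulVec (q1 - ps))
      = (q1 - ps) ⬝ᵥ IQ.mulVec (q1 - ps) - (q0 - ps) ⬝ᵥ IQ.mulVec (q0 - ps)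
        + (q1 - q0) ⬝ᵥ IQ.mulVec (q1 - q0) := by
    have h := sq_expand IQ hQs (q1 - ps) (q0 - ps)
    rw [show q1 - ps - (q0 - ps) = q1 - q0 by abel] at h
    exact h
  -- e9
  have E9 : (q1 - q0) ⬝ᵥ B.mulVec (v1 - v0)
      = (q1 - ps) ⬝ᵥ B.mulVec (v1 - us) - (q1 - ps) ⬝ᵥ B.mulVec (v0 - us)
        - (q0 - ps) ⬝ᵥ B.mulVec (v1 - us) + (q0 - ps) ⬝ᵥ B.mulVec (v0 - us) := by
    rw [show q1 - q0 = (q1 - ps) - (q0 - ps) by abel,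
      show v1 - v0 = (v1 - us) - (v0 - us) by abel]
    simp only [Matrix.mulVec_sub, sub_dotProduct, dotProduct_sub]
    ring
  -- i1
  have I1 := hcross (v1 - v0) (q1 - q0)
  -- i2
  have I2 : α * (-((q1 - ps) ⬝ᵥ B.mulVec (v1 - us)))
      ≤ μf/4 * ((v1 - us) ⬝ᵥ IV.mulVec (v1 - us))
        + μg/4 * ((q1 - ps) ⬝ᵥ IQ.mulVec (q1 - ps)) := by
    have h := hcross (us - v1) (q1 - ps)
    rw [show us - v1 = -(v1 - us) by abel, quad_neg, Matrix.mulVec_neg,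
      dotProduct_neg] at h
    exact h
  -- i3 : smoothness bound for f
  have V1 : (1 + α/2) • (u1 - uh1) = α • (v1 - v0) := by
    have key : (u1 - uh1) + α • (u1 - uh1) - (α/2) • (u1 - uh1) = α • (v1 - v0) := by
      linear_combination (norm := module) h4u - h1u
    linear_combination (norm := module) key
  have V1sq : (1 + α/2) * ((1 + α/2) * ((u1 - uh1) ⬝ᵥ IV.mulVec (u1 - uh1)))
      = α * (α * ((v1 - v0) ⬝ᵥ IV.mulVec (v1 - v0))) := by
    have hq := congrArg (fun t => t ⬝ᵥ IV.mulVec t) V1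
    simp only [smul_dotProduct, dotProduct_smul, Matrix.mulVec_smul,
      smul_eq_mul] at hq
    linear_combination hq
  have I3 : (1 + α/2) * breg f gradf u1 uh1
      ≤ μf/4 * ((v1 - v0) ⬝ᵥ IV.mulVec (v1 - v0)) :=
    smooth_bound α Lf μf _ _ _ hα0 hLf (hfup u1 uh1) (qnn hIV (u1 - uh1))
      (qnn hIV (v1 - v0)) V1sq hαf
  -- i4 : smoothness bound for g
  have W1 : (1 + α/2) • (p1 - ph1) = α • (q1 - q0) := by
    have key : (p1 - ph1) + α • (p1 - ph1) - (α/2) • (p1 - ph1) = α • (q1 - q0) := by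
      linear_combination (norm := module) h4p - h1p
    linear_combination (norm := module) key
  have W1sq : (1 + α/2) * ((1 + α/2) * ((p1 - ph1) ⬝ᵥ IQ.mulVec (p1 - ph1)))
      = α * (α * ((q1 - q0) ⬝ᵥ IQ.mulVec (q1 - q0))) := by
    have hq := congrArg (fun t => t ⬝ᵥ IQ.mulVec t) W1
    simp only [smul_dotProduct, dotProduct_smul, Matrix.mulVec_smul,
      smul_eq_mul] at hq
    linear_combination hq
  have I4 : (1 + α/2) * breg g gradg p1 ph1
      ≤ μg/4 * ((q1 - q0) ⬝ᵥ IQ.mulVec (q1 - q0)) :=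
    smooth_bound α Lg μg _ _ _ hα0 hLg (hgup p1 ph1) (qnn hIQ (p1 - ph1))
      (qnn hIQ (q1 - q0)) W1sq hαg
  -- i5, i6 : strong convexity at the saddle point
  have I5 : μf/2 * ((uh1 - us) ⬝ᵥ IV.mulVec (uh1 - us)) ≤ breg f gradf us uh1 := by
    have h := hflow us uh1
    rw [show us - uh1 = -(uh1 - us) by abel, quad_neg] at h
    exact h
  have I6 : μg/2 * ((ph1 - ps) ⬝ᵥ IQ.mulVec (ph1 - ps)) ≤ breg g gradg ps ph1 := by
    have h := hglow ps ph1
    rw [show ps - ph1 = -(ph1 - ps) by abel, quad_neg] at h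
    exact h
  -- i7, i8 : Cauchy-Schwarz in the M / N inner products
  have I7 := sq_ub hIV hVs (uh1 - us) (v1 - us)
  have I8 := sq_ub hIQ hQs (ph1 - ps) (q1 - ps)
  -- i9 - i14 : nonnegativity
  have I9 : (0:ℝ) ≤ breg f gradf u0 uh1 := by
    have h := hflow u0 uh1
    have h2 := qnn hIV (u0 - uh1)
    nlinarith
  have I10 : (0:ℝ) ≤ breg g gradg p0 ph1 := by
    have h := hglow p0 ph1
    have h2 := qnn hIQ (p0 - ph1)
    nlinarith
  have I11 : (0:ℝ) ≤ breg f gradf uh1 us := by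
    have h := hflow uh1 us
    have h2 := qnn hIV (uh1 - us)
    nlinarith
  have I12 : (0:ℝ) ≤ breg g gradg ph1 ps := by
    have h := hglow ph1 ps
    have h2 := qnn hIQ (ph1 - ps)
    nlinarith
  have I13 := qnn hIV (v1 - us)
  have I14 := qnn hIQ (q1 - ps)
  -- assemble
  rw [quadE IV IQ B μf μg α (v1 - us) (q1 - ps),
    quadE IV IQ B μf μg α (v0 - us) (q0 - ps),
    inv_mul_eq_div, le_div_iff₀ hden]
  have := combine α μf μg
    (breg f gradf u1 us) (breg f gradf u0 us) (breg f gradf uh1 us)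
    (breg f gradf us uh1) (breg f gradf u1 uh1) (breg f gradf u0 uh1)
    (breg g gradg p1 ps) (breg g gradg p0 ps) (breg g gradg ph1 ps)
    (breg g gradg ps ph1) (breg g gradg p1 ph1) (breg g gradg p0 ph1)
    ((v0 - us) ⬝ᵥ IV.mulVec (v0 - us)) ((v1 - us) ⬝ᵥ IV.mulVec (v1 - us))
    ((v1 - v0) ⬝ᵥ IV.mulVec (v1 - v0))
    ((q0 - ps) ⬝ᵥ IQ.mulVec (q0 - ps)) ((q1 - ps) ⬝ᵥ IQ.mulVec (q1 - ps))
    ((q1 - q0) ⬝ᵥ IQ.mulVec (q1 - q0))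
    ((uh1 - us) ⬝ᵥ IV.mulVec (v1 - us)) ((uh1 - us) ⬝ᵥ IV.mulVec (uh1 - us))
    ((ph1 - ps) ⬝ᵥ IQ.mulVec (q1 - ps)) ((ph1 - ps) ⬝ᵥ IQ.mulVec (ph1 - ps))
    ((q0 - ps) ⬝ᵥ B.mulVec (v0 - us)) ((q1 - ps) ⬝ᵥ B.mulVec (v1 - us))
    ((q0 - ps) ⬝ᵥ B.mulVec (v1 - us)) ((q1 - ps) ⬝ᵥ B.mulVec (v0 - us))
    ((q1 - q0) ⬝ᵥ B.mulVec (v1 - v0))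
    ((gradf uh1 - gradf us) ⬝ᵥ (u1 - uh1)) ((gradg ph1 - gradg ps) ⬝ᵥ (p1 - ph1))
    ((gradf uh1 - gradf us) ⬝ᵥ (v1 - us)) ((gradg ph1 - gradg ps) ⬝ᵥ (q1 - ps))
    ((v1 - v0) ⬝ᵥ IV.mulVec (v1 - us)) ((q1 - q0) ⬝ᵥ IQ.mulVec (q1 - ps))
    hα0 hμf hμg
    E1 E2 E3 E4 E5 E6 E7 E8 E9
    I1 I2 I3 I4 I5 I6 I7 I8 I9 I10 I11 I12 I13 I14
  linarith [this]
end

section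
/- (Strong Lyapunov property of the accelerated transformed primal-dual flow.) Let I_V (m×m) and I_Q (n×n) be symmetric positive definite, B ∈ ℝ^{n×m}, S = B I_V^{−1} Bᵀ. Let f : ℝ^m → ℝ be differentiable with (μ_f/2)‖u−u'‖²_{I_V} ≤ D_f(u,u') ≤ (L_f/2)‖u−u'‖²_{I_V}, μ_f > 0 and L_f ≤ 3/4; let g : ℝ^n → ℝ be differentiable, convex, and μ_g-strongly convex in the I_Q-norm (μ_g ≥ 0), and set g_S(p) = g(p) + (1/2)pᵀSp. Assume (2/3 − μ_g) pᵀI_Q p ≤ pᵀSp ≤ (1/(2L_f)) pᵀI_Q p for all p ∈ ℝ^n. Let (u*, p*) satisfy ∇f(u*) + Bᵀp* = 0 and −Bu* + ∇g(p*) = 0. Define E(u,v,p,q) = D_f(u,u*) + (μ_f/2)‖v−u*‖²_{I_V} + D_{g_S}(p,p*) + (1/2)‖q−p*‖²_{I_Q}, and the vector field G^u = v − u, G^v = (1/2)(u − v) − (1/μ_f) I_V^{−1}(∇f(u) + Bᵀq), G^p = q − p, G^q = p − q − I_Q^{−1}(∇g_S(p) − Bv + B I_V^{−1}∇f(u)).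 Then for all (u,v,p,q): −[⟨∇f(u)−∇f(u*), G^u⟩ + μ_f⟨I_V(v−u*), G^v⟩ + ⟨∇g_S(p)−∇g_S(p*), G^p⟩ + ⟨I_Q(q−p*), G^q⟩] ≥ (1/2) E(u,v,p,q). -/
open Matrix

section helpers
variable {k l : ℕ}

lemma dp_sym (M : Matrix (Fin k) (Fin k) ℝ) (hM : Mᵀ = M) (x y : Fin k → ℝ) :
    x ⬝ᵥ M *ᵥ y = y ⬝ᵥ M *ᵥ x := by
  rw [dotProduct_mulVec, ← mulVec_transpose, hM, dotProduct_comm]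

lemma dp_adj (A : Matrix (Fin k) (Fin l) ℝ) (x : Fin k → ℝ) (y : Fin l → ℝ) :
    x ⬝ᵥ A *ᵥ y = (Aᵀ *ᵥ x) ⬝ᵥ y := by
  rw [dotProduct_mulVec, ← mulVec_transpose]

lemma cs_ineq (M : Matrix (Fin k) (Fin k) ℝ) (hM : Mᵀ = M)
    (hpsd : ∀ z, 0 ≤ z ⬝ᵥ M *ᵥ z) (x y : Fin k → ℝ) :
    (x ⬝ᵥ M *ᵥ y) ^ 2 ≤ (x ⬝ᵥ M *ᵥ x) * (y ⬝ᵥ M *ᵥ y) := by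
  have key : ∀ t : ℝ, 0 ≤ (x ⬝ᵥ M *ᵥ x) * (t * t)
      + (2 * (x ⬝ᵥ M *ᵥ y)) * t + (y ⬝ᵥ M *ᵥ y) := by
    intro t
    have h0 := hpsd (t • x + y)
    have hexp : (t • x + y) ⬝ᵥ M *ᵥ (t • x + y)
        = (x ⬝ᵥ M *ᵥ x) * (t * t) + (2 * (x ⬝ᵥ M *ᵥ y)) * t + (y ⬝ᵥ M *ᵥ y) := by
      rw [mulVec_add, mulVec_smul]
      simp only [add_dotProduct, smul_dotProduct, dotProduct_add, dotProduct_smul,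
        smul_eq_mul]
      rw [dp_sym M hM y x]
      ring
    linarith [hexp ▸ h0]
  have hd := discrim_le_zero key
  rw [discrim] at hd
  nlinarith [hd]

lemma breg_add_rev (f : (Fin k → ℝ) → ℝ) (gf : (Fin k → ℝ) → (Fin k → ℝ))
    (x y : Fin k → ℝ) :
    breg f gf x y + breg f gf y x = (gf x - gf y) ⬝ᵥ (x - y) := by
  unfold breg
  rw [show y - x = -(x - y) from (neg_sub x y).symm, dotProduct_neg, sub_dotProduct]
  ring

lemma grad_sq_bound (M : Matrix (Fin k) (Fin k) ℝ) (hMpd : M.PosDef) (L : ℝ) (hL : 0 < L)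
    (f : (Fin k → ℝ) → ℝ) (gf : (Fin k → ℝ) → (Fin k → ℝ))
    (hconv : ∀ x y, 0 ≤ breg f gf x y)
    (hup : ∀ x y : Fin k → ℝ, breg f gf x y ≤ L / 2 * ((x - y) ⬝ᵥ M *ᵥ (x - y)))
    (x y : Fin k → ℝ) :
    (gf x - gf y) ⬝ᵥ M⁻¹ *ᵥ (gf x - gf y) ≤ 2 * L * breg f gf x y := by
  have hdet : IsUnit M.det := isUnit_iff_ne_zero.mpr (ne_of_gt hMpd.det_pos)
  set e : Fin k → ℝ := gf x - gf y with he
  set E2 : ℝ := e ⬝ᵥ M⁻¹ *ᵥ e with hE2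
  set z : Fin k → ℝ := x - (1 / L) • (M⁻¹ *ᵥ e) with hz
  have hcan : M *ᵥ (M⁻¹ *ᵥ e) = e := by
    rw [mulVec_mulVec, Matrix.mul_nonsing_inv _ hdet, one_mulVec]
  have hzx : z - x = -((1 / L) • (M⁻¹ *ᵥ e)) := by
    rw [hz]; abel
  have hq : (z - x) ⬝ᵥ M *ᵥ (z - x) = (1 / L) ^ 2 * E2 := by
    rw [hzx, mulVec_neg, mulVec_smul, neg_dotProduct, dotProduct_neg, neg_neg,
      smul_dotProduct, dotProduct_smul, hcan, smul_eq_mul, smul_eq_mul,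
      dotProduct_comm]
    ring
  have hzy : z - y = (x - y) - (1 / L) • (M⁻¹ *ᵥ e) := by
    rw [hz]; abel
  have h0 := hconv z y
  have h1 := hup z x
  rw [hq] at h1
  unfold breg at h0 h1
  rw [hzy, dotProduct_sub, dotProduct_smul, smul_eq_mul] at h0
  rw [hzx, dotProduct_neg, dotProduct_smul, smul_eq_mul] at h1
  have hEsub : gf x ⬝ᵥ M⁻¹ *ᵥ e - gf y ⬝ᵥ M⁻¹ *ᵥ e = E2 := by
    rw [hE2, he, sub_dotProduct]
  have hEsub' : 1 / L * (gf x ⬝ᵥ M⁻¹ *ᵥ e) - 1 / L * (gf y ⬝ᵥ M⁻¹ *ᵥ e)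
      = 1 / L * E2 := by rw [← mul_sub, hEsub]
  have hsimp : L / 2 * ((1 / L) ^ 2 * E2) = 1 / L * E2 - 1 / (2 * L) * E2 := by
    field_simp; ring
  have h2 : 1 / (2 * L) * E2 ≤ breg f gf x y := by
    unfold breg; linarith
  calc (gf x - gf y) ⬝ᵥ M⁻¹ *ᵥ (gf x - gf y) = E2 := by rw [hE2, he]
    _ = (2 * L) * (1 / (2 * L) * E2) := by field_simp
    _ ≤ 2 * L * breg f gf x y := by
        have := mul_le_mul_of_nonneg_left h2 (by positivity : (0:ℝ) ≤ 2 * L)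
        linarith
lemma sq_mix_bound (c x y : ℝ) (hx : 0 ≤ x) (hy : 0 ≤ y) (h : c ^ 2 ≤ x * y) :
    -(x / 2 + y / 2) ≤ c ∧ c ≤ x / 2 + y / 2 := by
  constructor <;> nlinarith [sq_nonneg (x - y)]
end helpers

set_option maxHeartbeats 1600000 in
/-- **Strong Lyapunov property of the accelerated transformed primal-dual flow.**
With `E(u,v,p,q) = D_f(u,u*) + (μ_f/2)‖v-u*‖²_{I_V} + D_{g_S}(p,p*) + ½‖q-p*‖²_{I_Q}`
and the ATPD vector field `G`, one has `-∇E · G ≥ ½E`. -/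
theorem atpd_flow_strong_lyapunov
    {m n : ℕ}
    (IV : Matrix (Fin m) (Fin m) ℝ) (IQ : Matrix (Fin n) (Fin n) ℝ)
    (hIV : IV.PosDef) (hIQ : IQ.PosDef)
    (B : Matrix (Fin n) (Fin m) ℝ)
    (μf Lf μg : ℝ) (hμf : 0 < μf) (hLf : Lf ≤ 3 / 4) (hμg : 0 ≤ μg)
    (f : (Fin m → ℝ) → ℝ) (gradf : (Fin m → ℝ) → (Fin m → ℝ))
    (hf : ∀ u, HasFDerivAt f (dpCLM (gradf u)) u)
    (hflow : ∀ u u' : Fin m → ℝ,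
      μf / 2 * ((u - u') ⬝ᵥ IV.mulVec (u - u')) ≤ breg f gradf u u')
    (hfup : ∀ u u' : Fin m → ℝ,
      breg f gradf u u' ≤ Lf / 2 * ((u - u') ⬝ᵥ IV.mulVec (u - u')))
    (g : (Fin n → ℝ) → ℝ) (gradg : (Fin n → ℝ) → (Fin n → ℝ))
    (hg : ∀ p, HasFDerivAt g (dpCLM (gradg p)) p)
    (hgconv : ∀ p p' : Fin n → ℝ, 0 ≤ breg g gradg p p')
    (hglow : ∀ p p' : Fin n → ℝ,
      μg / 2 * ((p - p') ⬝ᵥ IQ.mulVec (p - p')) ≤ breg g gradg p p')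
    (gS : (Fin n → ℝ) → ℝ) (gradgS : (Fin n → ℝ) → (Fin n → ℝ))
    (hgS : ∀ p, gS p = g p + (1 / 2) * (p ⬝ᵥ (B * IV⁻¹ * Bᵀ).mulVec p))
    (hgradgS : ∀ p, gradgS p = gradg p + (B * IV⁻¹ * Bᵀ).mulVec p)
    (hSlow : ∀ p : Fin n → ℝ,
      (2 / 3 - μg) * (p ⬝ᵥ IQ.mulVec p) ≤ p ⬝ᵥ (B * IV⁻¹ * Bᵀ).mulVec p)
    (hSup : ∀ p : Fin n → ℝ,
      p ⬝ᵥ (B * IV⁻¹ * Bᵀ).mulVec p ≤ (1 / (2 * Lf)) * (p ⬝ᵥ IQ.mulVec p))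
    (us : Fin m → ℝ) (ps : Fin n → ℝ)
    (hsad1 : gradf us + Bᵀ.mulVec ps = 0)
    (hsad2 : -(B.mulVec us) + gradg ps = 0) :
    ∀ (u v : Fin m → ℝ) (p q : Fin n → ℝ),
      (1 / 2) * (breg f gradf u us
          + μf / 2 * ((v - us) ⬝ᵥ IV.mulVec (v - us))
          + breg gS gradgS p ps
          + (1 / 2) * ((q - ps) ⬝ᵥ IQ.mulVec (q - ps)))
        ≤ -((gradf u - gradf us) ⬝ᵥ (v - u)
            + μf * (IV.mulVec (v - us) ⬝ᵥ
                ((1 / 2 : ℝ) • (u - v)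
                  - (1 / μf) • IV⁻¹.mulVec (gradf u + Bᵀ.mulVec q)))
            + (gradgS p - gradgS ps) ⬝ᵥ (q - p)
            + IQ.mulVec (q - ps) ⬝ᵥ
                (p - q - IQ⁻¹.mulVec (gradgS p - B.mulVec v
                  + B.mulVec (IV⁻¹.mulVec (gradf u))))) := by
  intro u v p q
  have hμf0 : μf ≠ 0 := ne_of_gt hμf
  -- basic matrix facts
  have hIVt : IVᵀ = IV := by simpa using hIV.isHermitian.eq
  have hIQt : IQᵀ = IQ := by simpa using hIQ.isHermitian.eq
  have hdetV : IsUnit IV.det := isUnit_iff_ne_zero.mpr (ne_of_gt hIV.det_pos)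
  have hdetQ : IsUnit IQ.det := isUnit_iff_ne_zero.mpr (ne_of_gt hIQ.det_pos)
  have hIVinvPD : (IV⁻¹).PosDef := hIV.inv
  have hIVinvT : (IV⁻¹)ᵀ = IV⁻¹ := by rw [Matrix.transpose_nonsing_inv, hIVt]
  have hSt : (B * IV⁻¹ * Bᵀ)ᵀ = B * IV⁻¹ * Bᵀ := by
    rw [Matrix.transpose_mul, Matrix.transpose_mul, Matrix.transpose_transpose,
      hIVinvT, Matrix.mul_assoc]
  have hpsdIV : ∀ z : Fin m → ℝ, 0 ≤ z ⬝ᵥ IV *ᵥ z := fun z => by simpa using hIV.posSemidef.dotProduct_mulVec_nonneg z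
  have hpsdIQ : ∀ z : Fin n → ℝ, 0 ≤ z ⬝ᵥ IQ *ᵥ z := fun z => by simpa using hIQ.posSemidef.dotProduct_mulVec_nonneg z
  have hpsdIVinv : ∀ z : Fin m → ℝ, 0 ≤ z ⬝ᵥ IV⁻¹ *ᵥ z := fun z => by simpa using hIVinvPD.posSemidef.dotProduct_mulVec_nonneg z
  have hcanIV : ∀ (w z : Fin m → ℝ), (IV *ᵥ w) ⬝ᵥ (IV⁻¹ *ᵥ z) = w ⬝ᵥ z := by
    intro w z
    rw [dotProduct_mulVec, ← mulVec_transpose, hIVinvT, mulVec_mulVec,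
      Matrix.nonsing_inv_mul _ hdetV, one_mulVec]
  have hcanIQ : ∀ (w z : Fin n → ℝ), (IQ *ᵥ w) ⬝ᵥ (IQ⁻¹ *ᵥ z) = w ⬝ᵥ z := by
    intro w z
    have hIQinvT : (IQ⁻¹)ᵀ = IQ⁻¹ := by rw [Matrix.transpose_nonsing_inv, hIQt]
    rw [dotProduct_mulVec, ← mulVec_transpose, hIQinvT, mulVec_mulVec,
      Matrix.nonsing_inv_mul _ hdetQ, one_mulVec]
  have hSexp : ∀ zz : Fin n → ℝ,
      (B * IV⁻¹ * Bᵀ) *ᵥ zz = B *ᵥ (IV⁻¹ *ᵥ (Bᵀ *ᵥ zz)) := by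
    intro zz; rw [← mulVec_mulVec, ← mulVec_mulVec]
  -- saddle point
  have hfus : gradf us = -(Bᵀ *ᵥ ps) := eq_neg_of_add_eq_zero_left hsad1
  have hgps : gradg ps = B *ᵥ us := by
    have h := hsad2
    rw [neg_add_eq_sub] at h
    exact sub_eq_zero.mp h
  -- convexity of f
  have hconvf : ∀ x y, 0 ≤ breg f gradf x y := fun x y =>
    le_trans (mul_nonneg (by positivity) (hpsdIV _)) (hflow x y)
  -- vector rearrangements
  have hVU : v - u = (v - us) - (u - us) := by abel
  have hUV : u - v = (u - us) - (v - us) := by abel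
  have hQP : q - p = (q - ps) - (p - ps) := by abel
  have hPQ : p - q = (p - ps) - (q - ps) := by abel
  have harg1 : gradf u + Bᵀ *ᵥ q = (gradf u - gradf us) + Bᵀ *ᵥ (q - ps) := by
    rw [hfus, mulVec_sub]; abel
  have harg2 : gradgS p - B *ᵥ v + B *ᵥ (IV⁻¹ *ᵥ gradf u)
      = (gradgS p - gradgS ps) - B *ᵥ (v - us)
        + B *ᵥ (IV⁻¹ *ᵥ (gradf u - gradf us)) := by
    rw [hgradgS ps, hgps, hfus]
    simp only [mulVec_sub, mulVec_neg, mulVec_add, hSexp]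
    abel
  -- the four pieces
  have hT1 : (gradf u - gradf us) ⬝ᵥ (v - u)
      = (gradf u - gradf us) ⬝ᵥ (v - us)
        - (breg f gradf u us + breg f gradf us u) := by
    rw [hVU, dotProduct_sub, ← breg_add_rev f gradf u us]
  have hT2 : μf * (IV.mulVec (v - us) ⬝ᵥ
        ((1 / 2 : ℝ) • (u - v) - (1 / μf) • IV⁻¹.mulVec (gradf u + Bᵀ.mulVec q)))
      = μf / 2 * ((u - us) ⬝ᵥ IV *ᵥ (v - us))
        - μf / 2 * ((v - us) ⬝ᵥ IV *ᵥ (v - us))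
        - (v - us) ⬝ᵥ (gradf u - gradf us)
        - (v - us) ⬝ᵥ (Bᵀ *ᵥ (q - ps)) := by
    rw [harg1, hUV]
    rw [dotProduct_sub (IV *ᵥ (v - us))
      (((1 : ℝ) / 2) • (u - us - (v - us)))
      (((1 : ℝ) / μf) • (IV⁻¹ *ᵥ (gradf u - gradf us + Bᵀ *ᵥ (q - ps))))]
    rw [dotProduct_smul, dotProduct_smul, hcanIV]
    rw [dotProduct_sub (IV *ᵥ (v - us)) (u - us) (v - us)]
    rw [dotProduct_add (v - us) (gradf u - gradf us) (Bᵀ *ᵥ (q - ps))]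
    rw [dotProduct_comm (IV *ᵥ (v - us)) (u - us),
      dotProduct_comm (IV *ᵥ (v - us)) (v - us)]
    rw [smul_eq_mul, smul_eq_mul]
    field_simp
    ring
  have hT3 : (gradgS p - gradgS ps) ⬝ᵥ (q - p)
      = (gradgS p - gradgS ps) ⬝ᵥ (q - ps)
        - (breg gS gradgS p ps + breg gS gradgS ps p) := by
    rw [hQP, dotProduct_sub, ← breg_add_rev gS gradgS p ps]
  have hT4 : IQ.mulVec (q - ps) ⬝ᵥ
        (p - q - IQ⁻¹.mulVec (gradgS p - B.mulVec v + B.mulVec (IV⁻¹.mulVec (gradf u))))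
      = (q - ps) ⬝ᵥ IQ *ᵥ (p - ps)
        - (q - ps) ⬝ᵥ IQ *ᵥ (q - ps)
        - (q - ps) ⬝ᵥ (gradgS p - gradgS ps)
        + (q - ps) ⬝ᵥ B *ᵥ (v - us)
        - (q - ps) ⬝ᵥ B *ᵥ (IV⁻¹ *ᵥ (gradf u - gradf us)) := by
    rw [harg2, hPQ]
    rw [dotProduct_sub (IQ *ᵥ (q - ps)) (p - ps - (q - ps))]
    rw [dotProduct_sub (IQ *ᵥ (q - ps)) (p - ps) (q - ps)]
    rw [hcanIQ]
    rw [dotProduct_add (q - ps)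
      (gradgS p - gradgS ps - B *ᵥ (v - us)) (B *ᵥ (IV⁻¹ *ᵥ (gradf u - gradf us)))]
    rw [dotProduct_sub (q - ps) (gradgS p - gradgS ps) (B *ᵥ (v - us))]
    rw [dotProduct_comm (IQ *ᵥ (q - ps)) (p - ps),
      dp_sym IQ hIQt (p - ps) (q - ps),
      dotProduct_comm (IQ *ᵥ (q - ps)) (q - ps)]
    ring
  have hBadj : (q - ps) ⬝ᵥ B *ᵥ (v - us) = (v - us) ⬝ᵥ Bᵀ *ᵥ (q - ps) := by
    rw [dp_adj B (q - ps) (v - us), dotProduct_comm]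
  have hsum : (gradf u - gradf us) ⬝ᵥ (v - u)
      + μf * (IV.mulVec (v - us) ⬝ᵥ
          ((1 / 2 : ℝ) • (u - v) - (1 / μf) • IV⁻¹.mulVec (gradf u + Bᵀ.mulVec q)))
      + (gradgS p - gradgS ps) ⬝ᵥ (q - p)
      + IQ.mulVec (q - ps) ⬝ᵥ
          (p - q - IQ⁻¹.mulVec (gradgS p - B.mulVec v + B.mulVec (IV⁻¹.mulVec (gradf u))))
      = μf / 2 * ((u - us) ⬝ᵥ IV *ᵥ (v - us))
        - μf / 2 * ((v - us) ⬝ᵥ IV *ᵥ (v - us))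
        - (breg f gradf u us + breg f gradf us u)
        - (breg gS gradgS p ps + breg gS gradgS ps p)
        + (q - ps) ⬝ᵥ IQ *ᵥ (p - ps)
        - (q - ps) ⬝ᵥ IQ *ᵥ (q - ps)
        - (q - ps) ⬝ᵥ B *ᵥ (IV⁻¹ *ᵥ (gradf u - gradf us)) := by
    rw [hT1, hT2, hT3, hT4]
    linear_combination (dotProduct_comm (gradf u - gradf us) (v - us))
      + (dotProduct_comm (gradgS p - gradgS ps) (q - ps)) + hBadj
  -- g_S Bregman decomposition
  have hDgS : breg gS gradgS p ps
      = breg g gradg p ps + 1 / 2 * ((p - ps) ⬝ᵥ (B * IV⁻¹ * Bᵀ) *ᵥ (p - ps)) := by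
    unfold breg
    rw [hgS p, hgS ps, hgradgS ps]
    simp only [add_dotProduct, dotProduct_sub, sub_dotProduct, mulVec_sub, dotProduct_add]
    linarith [dotProduct_comm ((B * IV⁻¹ * Bᵀ) *ᵥ ps) p,
      dotProduct_comm ((B * IV⁻¹ * Bᵀ) *ᵥ ps) ps,
      dp_sym _ hSt ps p]
  have hDgSrev : breg gS gradgS ps p
      = breg g gradg ps p + 1 / 2 * ((p - ps) ⬝ᵥ (B * IV⁻¹ * Bᵀ) *ᵥ (p - ps)) := by
    unfold breg
    rw [hgS p, hgS ps, hgradgS p]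
    simp only [add_dotProduct, dotProduct_sub, sub_dotProduct, mulVec_sub, dotProduct_add]
    linarith [dotProduct_comm ((B * IV⁻¹ * Bᵀ) *ᵥ p) ps,
      dotProduct_comm ((B * IV⁻¹ * Bᵀ) *ᵥ p) p,
      dp_sym _ hSt ps p]
  -- scalar inequalities
  have hAsym : (us - u) ⬝ᵥ IV *ᵥ (us - u) = (u - us) ⬝ᵥ IV *ᵥ (u - us) := by
    rw [show us - u = -(u - us) by abel, mulVec_neg, dotProduct_neg, neg_dotProduct,
      neg_neg]
  have hRsym : (ps - p) ⬝ᵥ IQ *ᵥ (ps - p) = (p - ps) ⬝ᵥ IQ *ᵥ (p - ps) := by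
    rw [show ps - p = -(p - ps) by abel, mulVec_neg, dotProduct_neg, neg_dotProduct,
      neg_neg]
  have hx1 := hflow u us
  have hx2 := hflow us u
  rw [hAsym] at hx2
  have hd1 := hglow p ps
  have hd2 := hglow ps p
  rw [hRsym] at hd2
  have hZlow := hSlow (p - ps)
  have hSq0 : 0 ≤ (q - ps) ⬝ᵥ IQ *ᵥ (q - ps) := hpsdIQ _
  have hA0 : 0 ≤ (u - us) ⬝ᵥ IV *ᵥ (u - us) := hpsdIV _
  have hW0 : 0 ≤ (v - us) ⬝ᵥ IV *ᵥ (v - us) := hpsdIV _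
  have hR0 : 0 ≤ (p - ps) ⬝ᵥ IQ *ᵥ (p - ps) := hpsdIQ _
  -- Cauchy-Schwarz bounds
  have hc1sq := cs_ineq IV hIVt hpsdIV (u - us) (v - us)
  have hc1b : μf / 2 * ((u - us) ⬝ᵥ IV *ᵥ (v - us))
      ≤ μf / 4 * ((u - us) ⬝ᵥ IV *ᵥ (u - us)) + μf / 4 * ((v - us) ⬝ᵥ IV *ᵥ (v - us)) := by
    have h1 := (sq_mix_bound _ _ _ hA0 hW0 hc1sq).2
    have h2 := mul_le_mul_of_nonneg_left h1 (le_of_lt (by linarith : (0:ℝ) < μf / 2))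
    linarith only [h2]
  have hc2sq := cs_ineq IQ hIQt hpsdIQ (q - ps) (p - ps)
  have hc2b : (q - ps) ⬝ᵥ IQ *ᵥ (p - ps)
      ≤ 1 / 2 * ((q - ps) ⬝ᵥ IQ *ᵥ (q - ps)) + 1 / 2 * ((p - ps) ⬝ᵥ IQ *ᵥ (p - ps)) := by
    have h1 := (sq_mix_bound _ _ _ hSq0 hR0 hc2sq).2
    linarith only [h1]
  -- the cross-term bound
  have hc3b : -((q - ps) ⬝ᵥ IQ *ᵥ (q - ps) / 4 + breg f gradf u us / 2 + breg f gradf us u / 2)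
      ≤ (q - ps) ⬝ᵥ B *ᵥ (IV⁻¹ *ᵥ (gradf u - gradf us)) := by
    by_cases hm : ∀ z : Fin m → ℝ, z = 0
    · have h0 : gradf u - gradf us = (0 : Fin m → ℝ) := hm _
      rw [h0]
      simp only [Matrix.mulVec_zero, dotProduct_zero]
      have h1 := hconvf u us
      have h2 := hconvf us u
      linarith only [h1, h2, hSq0]
    · push_neg at hm
      obtain ⟨z, hz⟩ := hm
      have hzpos : 0 < z ⬝ᵥ IV *ᵥ z := by simpa using hIV.dotProduct_mulVec_pos hz
      have hLfpos : 0 < Lf := by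
        have h1 := hflow z 0
        have h2 := hfup z 0
        rw [sub_zero] at h1 h2
        have h3 : 0 < μf / 2 * (z ⬝ᵥ IV *ᵥ z) :=
          mul_pos (by linarith) hzpos
        have h4 : 0 < Lf / 2 * (z ⬝ᵥ IV *ᵥ z) := lt_of_lt_of_le h3 (h1.trans h2)
        by_contra hneg
        push_neg at hneg
        have h5 : Lf / 2 * (z ⬝ᵥ IV *ᵥ z) ≤ 0 :=
          mul_nonpos_of_nonpos_of_nonneg (by linarith) (le_of_lt hzpos)
        linarith only [h4, h5]
      have hE2a := grad_sq_bound IV hIV Lf hLfpos f gradf hconvf hfup u us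
      have hE2b := grad_sq_bound IV hIV Lf hLfpos f gradf hconvf hfup us u
      have hEsym : (gradf us - gradf u) ⬝ᵥ IV⁻¹ *ᵥ (gradf us - gradf u)
          = (gradf u - gradf us) ⬝ᵥ IV⁻¹ *ᵥ (gradf u - gradf us) := by
        rw [show gradf us - gradf u = -(gradf u - gradf us) by abel, mulVec_neg,
          dotProduct_neg, neg_dotProduct, neg_neg]
      rw [hEsym] at hE2b
      have hE2ab : (gradf u - gradf us) ⬝ᵥ IV⁻¹ *ᵥ (gradf u - gradf us)
          ≤ Lf * (breg f gradf u us + breg f gradf us u) := by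
        linarith only [hE2a, hE2b]
      have hYeq : (q - ps) ⬝ᵥ (B * IV⁻¹ * Bᵀ) *ᵥ (q - ps)
          = (Bᵀ *ᵥ (q - ps)) ⬝ᵥ IV⁻¹ *ᵥ (Bᵀ *ᵥ (q - ps)) := by
        rw [hSexp, dp_adj B]
      have hYb := hSup (q - ps)
      rw [hYeq] at hYb
      have hY0 : 0 ≤ (Bᵀ *ᵥ (q - ps)) ⬝ᵥ IV⁻¹ *ᵥ (Bᵀ *ᵥ (q - ps)) := hpsdIVinv _
      have hE20 : 0 ≤ (gradf u - gradf us) ⬝ᵥ IV⁻¹ *ᵥ (gradf u - gradf us) := hpsdIVinv _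
      have hcsq := cs_ineq IV⁻¹ hIVinvT hpsdIVinv (Bᵀ *ᵥ (q - ps)) (gradf u - gradf us)
      have hadj : (q - ps) ⬝ᵥ B *ᵥ (IV⁻¹ *ᵥ (gradf u - gradf us))
          = (Bᵀ *ᵥ (q - ps)) ⬝ᵥ IV⁻¹ *ᵥ (gradf u - gradf us) := dp_adj B _ _
      rw [hadj]
      have hx10 := hconvf u us
      have hx20 := hconvf us u
      have hprod : ((Bᵀ *ᵥ (q - ps)) ⬝ᵥ IV⁻¹ *ᵥ (Bᵀ *ᵥ (q - ps)))
            * ((gradf u - gradf us) ⬝ᵥ IV⁻¹ *ᵥ (gradf u - gradf us))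
          ≤ (1 / (2 * Lf) * ((q - ps) ⬝ᵥ IQ *ᵥ (q - ps)))
            * (Lf * (breg f gradf u us + breg f gradf us u)) := by
        apply mul_le_mul hYb hE2ab hE20
        positivity
      have hLcancel : (1 / (2 * Lf) * ((q - ps) ⬝ᵥ IQ *ᵥ (q - ps)))
            * (Lf * (breg f gradf u us + breg f gradf us u))
          = ((q - ps) ⬝ᵥ IQ *ᵥ (q - ps)) * (breg f gradf u us + breg f gradf us u) / 2 := by
        field_simp
      rw [hLcancel] at hprod
      have hc32 : ((Bᵀ *ᵥ (q - ps)) ⬝ᵥ IV⁻¹ *ᵥ (gradf u - gradf us)) ^ 2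
          ≤ ((q - ps) ⬝ᵥ IQ *ᵥ (q - ps) / 2)
            * (breg f gradf u us + breg f gradf us u) := by
        linarith only [hcsq, hprod]
      have hfin := (sq_mix_bound _ _ _ (by linarith only [hSq0] : (0:ℝ) ≤ (q - ps) ⬝ᵥ IQ *ᵥ (q - ps) / 2)
        (by linarith only [hx10, hx20]) hc32).1
      linarith only [hfin]
  -- final assembly
  linarith only [hsum, hDgS, hDgSrev, hc1b, hc2b, hc3b, hx1, hx2, hd1, hd2, hZlow, hSq0]
end
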